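/- Let ρ > 1 and p(x) = ρx(1+x). Then for every x ≥ 0 the sequence pⁿ(x/ρⁿ) converges as n → ∞ to φ⁻¹(x), where φ is the Schröder function for the inverse map f(x) = √(1/4 + x/ρ) − 1/2; in particular sup_n pⁿ(x/ρⁿ) < ∞ for each x ≥ 0. -/

import Mathlib

open Filter Topology

/-- For `p(x) = ρx(1+x)` the scaled iterates `pⁿ(x/ρⁿ)` converge to `φ⁻¹(x)`,
where `φ` is the Schröder function of the inverse branch `f`; in particular
they are bounded in `n`. -/
theorem scaled_iterates_converge_to_inverse_schroder
    (ρ : ℝ) (hρ : 1 < ρ)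
    (p f : ℝ → ℝ)
    (hp : ∀ x : ℝ, p x = ρ * x * (1 + x))
    (hf : ∀ x : ℝ, f x = Real.sqrt (1 / 4 + x / ρ) - 1 / 2)
    (φ φinv : ℝ → ℝ)
    (hφ : ∀ x : ℝ, 0 ≤ x →
      Tendsto (fun n : ℕ => f^[n] x * ρ ^ n) atTop (𝓝 (φ x)))
    (hschroder : ∀ x : ℝ, 0 ≤ x → φ (f x) = φ x / ρ)
    (hderiv : HasDerivWithinAt φ 1 (Set.Ici 0) 0)
    (hinv1 : ∀ y : ℝ, 0 ≤ y → φ (φinv y) = y)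
    (hinv2 : ∀ x : ℝ, 0 ≤ x → φinv (φ x) = x) :
    ∀ x : ℝ, 0 ≤ x →
      Tendsto (fun n : ℕ => p^[n] (x / ρ ^ n)) atTop (𝓝 (φinv x)) ∧
      BddAbove (Set.range fun n : ℕ => p^[n] (x / ρ ^ n)) := by
  have hρ0 : (0:ℝ) < ρ := lt_trans one_pos hρ
  have hρ0' : ρ ≠ 0 := ne_of_gt hρ0
  have hρn : ∀ n : ℕ, (0:ℝ) < ρ ^ n := fun n => pow_pos hρ0 n
  -- basic facts about f
  have hsq : ∀ a : ℝ, 0 ≤ a → (1:ℝ)/2 ≤ Real.sqrt (1/4 + a/ρ) := by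
    intro a ha
    have h1 : (1:ℝ)/4 ≤ 1/4 + a/ρ := by
      have : 0 ≤ a / ρ := div_nonneg ha hρ0.le
      linarith
    calc (1:ℝ)/2 = Real.sqrt (1/4) := by
          rw [show (1:ℝ)/4 = (1/2)^2 by norm_num, Real.sqrt_sq (by norm_num)]
      _ ≤ _ := Real.sqrt_le_sqrt h1
  have hf0 : f 0 = 0 := by
    rw [hf]
    have : Real.sqrt (1/4 + 0/ρ) = 1/2 := by
      rw [show (1:ℝ)/4 + 0/ρ = (1/2)^2 by field_simp; norm_num; ring,
        Real.sqrt_sq (by norm_num)]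
    rw [this]; ring
  have hfnn : ∀ a : ℝ, 0 ≤ a → 0 ≤ f a := by
    intro a ha; rw [hf]; have := hsq a ha; linarith
  -- f is monotone and (1/ρ)-Lipschitz on [0,∞)
  have hfL : ∀ a b : ℝ, 0 ≤ a → a ≤ b → f a ≤ f b ∧ f b - f a ≤ (b - a)/ρ := by
    intro a b ha hab
    have hb : 0 ≤ b := le_trans ha hab
    set A := Real.sqrt (1/4 + a/ρ) with hA
    set B := Real.sqrt (1/4 + b/ρ) with hB
    have hA2 : A^2 = 1/4 + a/ρ := Real.sq_sqrt (by positivity)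
    have hB2 : B^2 = 1/4 + b/ρ := Real.sq_sqrt (by positivity)
    have hA1 : (1:ℝ)/2 ≤ A := hsq a ha
    have hB1 : (1:ℝ)/2 ≤ B := hsq b hb
    have hAB : A ≤ B := Real.sqrt_le_sqrt (by gcongr)
    constructor
    · rw [hf, hf]; linarith
    · rw [hf, hf]
      have key : B - A ≤ (b - a)/ρ := by
        have h1 : (B - A) * (B + A) = (b - a)/ρ := by
          have : B^2 - A^2 = (b-a)/ρ := by rw [hA2, hB2]; ring
          nlinarith [this]
        nlinarith [sub_nonneg.mpr hAB]
      linarith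
  have hfmono : ∀ a b : ℝ, 0 ≤ a → a ≤ b → f a ≤ f b := fun a b ha hab => (hfL a b ha hab).1
  -- ρ f(a) ≤ a
  have hρf : ∀ a : ℝ, 0 ≤ a → ρ * f a ≤ a := by
    intro a ha
    rw [hf]
    have h2 : Real.sqrt (1/4 + a/ρ) ≤ 1/2 + a/ρ := by
      rw [show (1:ℝ)/2 + a/ρ = Real.sqrt ((1/2 + a/ρ)^2) from
        (Real.sqrt_sq (by positivity)).symm]
      apply Real.sqrt_le_sqrt
      nlinarith [div_nonneg ha hρ0.le]
    have : ρ * (Real.sqrt (1/4 + a/ρ) - 1/2) ≤ ρ * (a/ρ) := by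
      apply mul_le_mul_of_nonneg_left _ hρ0.le
      linarith
    calc ρ * (Real.sqrt (1/4 + a/ρ) - 1/2) ≤ ρ * (a/ρ) := this
      _ = a := by field_simp
  -- f inverts p
  have hpnn : ∀ a : ℝ, 0 ≤ a → 0 ≤ p a := by
    intro a ha; rw [hp]; positivity
  have hpmono : ∀ a b : ℝ, 0 ≤ a → a ≤ b → p a ≤ p b := by
    intro a b ha hab; rw [hp, hp]
    nlinarith [mul_nonneg hρ0.le (mul_nonneg (sub_nonneg.mpr hab) (show (0:ℝ) ≤ 1 + a + b by linarith))]
  have hfp : ∀ a : ℝ, 0 ≤ a → f (p a) = a := by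
    intro a ha
    rw [hf, hp]
    have : (1:ℝ)/4 + ρ * a * (1 + a) / ρ = (a + 1/2)^2 := by field_simp; ring
    rw [this, Real.sqrt_sq (by linarith)]
    ring
  -- iterate facts
  have hpin : ∀ (n : ℕ) (a : ℝ), 0 ≤ a → 0 ≤ p^[n] a := by
    intro n; induction n with
    | zero => intro a ha; simpa using ha
    | succ n ih => intro a ha; rw [Function.iterate_succ_apply]; exact ih _ (hpnn a ha)
  have hpimono : ∀ (n : ℕ) (a b : ℝ), 0 ≤ a → a ≤ b → p^[n] a ≤ p^[n] b := by
    intro n; induction n with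
    | zero => intro a b _ hab; simpa using hab
    | succ n ih => intro a b ha hab
                   rw [Function.iterate_succ_apply, Function.iterate_succ_apply]
                   exact ih _ _ (hpnn a ha) (hpmono a b ha hab)
  have hfin : ∀ (n : ℕ) (a : ℝ), 0 ≤ a → 0 ≤ f^[n] a := by
    intro n; induction n with
    | zero => intro a ha; simpa using ha
    | succ n ih => intro a ha; rw [Function.iterate_succ_apply]; exact ih _ (hfnn a ha)
  have hfpn : ∀ (n : ℕ) (a : ℝ), 0 ≤ a → f^[n] (p^[n] a) = a := by
    intro n; induction n with
    | zero => intro a _; simp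
    | succ n ih => intro a ha
                   rw [Function.iterate_succ_apply' (f := p), Function.iterate_succ_apply (f := f),
                     hfp _ (hpin n a ha), ih a ha]
  have hfiter : ∀ (n : ℕ) (a : ℝ), 0 ≤ a → ρ^n * f^[n] a ≤ a := by
    intro n; induction n with
    | zero => intro a _; simp
    | succ n ih => intro a ha
                   rw [Function.iterate_succ_apply' (f := f)]
                   have h1 : ρ * f (f^[n] a) ≤ f^[n] a := hρf _ (hfin n a ha)
                   have h2 : ρ^n * (ρ * f (f^[n] a)) ≤ ρ^n * f^[n] a :=
                     mul_le_mul_of_nonneg_left h1 (hρn n).le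
                   calc ρ^(n+1) * f (f^[n] a) = ρ^n * (ρ * f (f^[n] a)) := by ring
                     _ ≤ ρ^n * f^[n] a := h2
                     _ ≤ a := ih a ha
  have hfiL : ∀ (n : ℕ) (a b : ℝ), 0 ≤ a → a ≤ b →
      f^[n] a ≤ f^[n] b ∧ f^[n] b - f^[n] a ≤ (b - a)/ρ^n := by
    intro n; induction n with
    | zero => intro a b _ hab; simp [hab]
    | succ n ih => intro a b ha hab
                   rw [Function.iterate_succ_apply' (f := f), Function.iterate_succ_apply' (f := f)]
                   obtain ⟨h1, h2⟩ := ih a b ha hab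
                   have hna : 0 ≤ f^[n] a := hfin n a ha
                   obtain ⟨h3, h4⟩ := hfL _ _ hna h1
                   refine ⟨h3, ?_⟩
                   have : (f^[n] b - f^[n] a)/ρ ≤ ((b - a)/ρ^n)/ρ := by gcongr
                   calc f (f^[n] b) - f (f^[n] a) ≤ (f^[n] b - f^[n] a)/ρ := h4
                     _ ≤ ((b - a)/ρ^n)/ρ := this
                     _ = (b - a)/ρ^(n+1) := by rw [div_div, pow_succ]
  -- iterated Schröder relation
  have hschn : ∀ (n : ℕ) (a : ℝ), 0 ≤ a → φ (f^[n] a) = φ a / ρ^n := by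
    intro n; induction n with
    | zero => intro a _; simp
    | succ n ih => intro a ha
                   rw [Function.iterate_succ_apply (f := f), ih _ (hfnn a ha),
                     hschroder a ha, div_div, pow_succ]
                   ring_nf
  -- φ facts
  have hφ0 : φ 0 = 0 := by
    have := hschroder 0 le_rfl
    rw [hf0] at this
    have h1 : φ 0 * ρ = φ 0 := by field_simp at this; linarith [this]
    nlinarith
  have hφmono : ∀ a b : ℝ, 0 ≤ a → a ≤ b → φ a ≤ φ b := by
    intro a b ha hab
    refine le_of_tendsto_of_tendsto' (hφ a ha) (hφ b (le_trans ha hab)) ?_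
    intro n
    exact mul_le_mul_of_nonneg_right (hfiL n a b ha hab).1 (hρn n).le
  have hφle : ∀ a : ℝ, 0 ≤ a → φ a ≤ a := by
    intro a ha
    refine le_of_tendsto (hφ a ha) (Eventually.of_forall fun n => ?_)
    have := hfiter n a ha
    linarith [this]
  -- slope limit at 0
  have hslope : Tendsto (fun t : ℝ => φ t / t) (𝓝[>] (0:ℝ)) (𝓝 1) := by
    have h := hasDerivWithinAt_iff_tendsto_slope.mp hderiv
    rw [Set.Ici_sdiff_left] at h
    refine h.congr' ?_
    filter_upwards [self_mem_nhdsWithin] with t ht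
    rw [slope_def_field, hφ0]
    ring_nf
  have hρpow : Tendsto (fun n : ℕ => ρ ^ n) atTop atTop :=
    tendsto_pow_atTop_atTop_of_one_lt hρ
  -- main argument
  intro x hx
  rcases eq_or_lt_of_le hx with heq | hxpos
  · -- x = 0
    have hzero : ∀ n : ℕ, p^[n] ((0:ℝ) / ρ ^ n) = 0 := by
      intro n
      have hp0 : p 0 = 0 := by rw [hp]; ring
      have : ∀ m : ℕ, p^[m] (0:ℝ) = 0 := by
        intro m; induction m with
        | zero => simp
        | succ m ih => rw [Function.iterate_succ_apply, hp0, ih]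
      simpa using this n
    have hinv0 : φinv 0 = 0 := by
      have := hinv2 0 le_rfl
      rwa [hφ0] at this
    rw [← heq]
    constructor
    · simp only [hzero, hinv0]
      exact tendsto_const_nhds
    · refine ⟨0, ?_⟩
      rintro _ ⟨n, rfl⟩
      exact le_of_eq (hzero n)
  · -- x > 0
    set y : ℕ → ℝ := fun n => p^[n] (x / ρ ^ n) with hy
    have hxρn : ∀ n : ℕ, 0 ≤ x / ρ ^ n := fun n => div_nonneg hx (hρn n).le
    have hynn : ∀ n, 0 ≤ y n := fun n => hpin n _ (hxρn n)
    have hy0 : y 0 = x := by simp [hy]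
    have hymono : Monotone y := by
      apply monotone_nat_of_le_succ
      intro n
      have hstep : x / ρ ^ n ≤ p (x / ρ ^ (n+1)) := by
        rw [hp]
        have h1 : ρ * (x / ρ^(n+1)) = x / ρ^n := by
          field_simp; ring
        rw [h1]
        nlinarith [hxρn n, hxρn (n+1), div_nonneg hx (hρn n).le]
      calc y n = p^[n] (x / ρ^n) := rfl
        _ ≤ p^[n] (p (x / ρ^(n+1))) := hpimono n _ _ (hxρn n) hstep
        _ = y (n+1) := (Function.iterate_succ_apply p n _).symm
    -- key identity
    have hkey : ∀ n, φ (y n) = ρ^n * φ (x / ρ^n) := by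
      intro n
      have h1 := hschn n (y n) (hynn n)
      rw [show f^[n] (y n) = x / ρ^n from hfpn n _ (hxρn n)] at h1
      field_simp at h1 ⊢
      linarith [h1]
    -- φ(y n) ≤ x
    have hφyle : ∀ n, φ (y n) ≤ x := by
      intro n
      rw [hkey n]
      have := hφle (x / ρ^n) (hxρn n)
      calc ρ^n * φ (x/ρ^n) ≤ ρ^n * (x/ρ^n) := mul_le_mul_of_nonneg_left this (hρn n).le
        _ = x := by field_simp
    -- φ(y n) → x
    have htend0 : Tendsto (fun n : ℕ => x / ρ^n) atTop (𝓝[>] (0:ℝ)) := by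
      rw [tendsto_nhdsWithin_iff]
      constructor
      · exact Tendsto.div_atTop tendsto_const_nhds hρpow
      · exact Eventually.of_forall fun n => div_pos hxpos (hρn n)
    have hφy : Tendsto (fun n => φ (y n)) atTop (𝓝 x) := by
      have h1 : Tendsto (fun n : ℕ => φ (x/ρ^n) / (x/ρ^n)) atTop (𝓝 1) :=
        hslope.comp htend0
      have h2 : Tendsto (fun n : ℕ => x * (φ (x/ρ^n) / (x/ρ^n))) atTop (𝓝 (x * 1)) :=
        h1.const_mul x
      rw [mul_one] at h2
      refine h2.congr fun n => ?_
      rw [hkey n]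
      have hne : x / ρ^n ≠ 0 := ne_of_gt (div_pos hxpos (hρn n))
      field_simp
    -- find a point with positive φ value
    obtain ⟨t, htpos, hφt⟩ : ∃ t : ℝ, 0 < t ∧ 0 < φ t := by
      have h1 : ∀ᶠ t in 𝓝[>] (0:ℝ), (1:ℝ)/2 < φ t / t :=
        hslope.eventually (eventually_gt_nhds (by norm_num))
      obtain ⟨t, ht1, ht2⟩ := (h1.and self_mem_nhdsWithin).exists
      refine ⟨t, ht2, ?_⟩
      have : 0 < φ t / t := lt_trans (by norm_num) ht1
      have := mul_pos this ht2
      rwa [div_mul_cancel₀ _ (ne_of_gt ht2)] at this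
    -- choose m with ρ^m * φ t > x
    obtain ⟨m, hm⟩ : ∃ m : ℕ, x / φ t < ρ ^ m :=
      (hρpow.eventually_gt_atTop (x / φ t)).exists
    have hMgt : x < ρ^m * φ t := by
      rw [div_lt_iff₀ hφt] at hm
      linarith
    set M := p^[m] t with hM
    have hMnn : 0 ≤ M := hpin m t htpos.le
    have hφM : φ M = ρ^m * φ t := by
      have h1 := hschn m M hMnn
      rw [hM, hfpn m t htpos.le] at h1
      field_simp at h1
      linarith
    -- bound
    have hyM : ∀ n, y n ≤ M := by
      intro n
      by_contra hcon
      push_neg at hcon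
      have h1 : φ M ≤ φ (y n) := hφmono M (y n) hMnn hcon.le
      have := hφyle n
      rw [hφM] at h1
      linarith
    have hbdd : BddAbove (Set.range y) := ⟨M, by rintro _ ⟨n, rfl⟩; exact hyM n⟩
    set L := ⨆ n, y n with hL
    have hLtend : Tendsto y atTop (𝓝 L) := tendsto_atTop_ciSup hymono hbdd
    have hyL : ∀ n, y n ≤ L := fun n => le_ciSup hbdd n
    have hL0 : 0 ≤ L := le_trans (hynn 0) (hyL 0)
    -- x ≤ φ L
    have hφLge : x ≤ φ L :=
      le_of_tendsto hφy (Eventually.of_forall fun n => hφmono _ _ (hynn n) (hyL n))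
    -- φ L ≤ x
    have hφLle : φ L ≤ x := by
      set c : ℕ → ℝ := fun n => x + (L - y n) with hc
      set a : ℕ → ℝ := fun n => c n / ρ^n with ha
      have hcpos : ∀ n, 0 < c n := by
        intro n
        have := hyL n
        simp only [hc]
        linarith
      have hapos : ∀ n, 0 < a n := fun n => div_pos (hcpos n) (hρn n)
      have hbound : ∀ n, φ L ≤ c n * (φ (a n) / a n) := by
        intro n
        have h1 := hschn n L hL0
        have h2 : f^[n] L ≤ a n := by
          have h3 := (hfiL n (y n) L (hynn n) (hyL n)).2
          rw [hfpn n _ (hxρn n)] at h3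
          simp only [ha, hc]
          rw [add_div]
          linarith [h3]
        have h4 : φ (f^[n] L) ≤ φ (a n) := hφmono _ _ (hfin n L hL0) h2
        have h5 : φ L = ρ^n * φ (f^[n] L) := by
          rw [h1]; field_simp
        rw [h5]
        have h6 : c n * (φ (a n) / a n) = ρ^n * φ (a n) := by
          simp only [ha]
          rw [div_div_eq_mul_div, mul_comm]
          field_simp [ne_of_gt (hcpos n)]
        rw [h6]
        exact mul_le_mul_of_nonneg_left h4 (hρn n).le
      have hctend : Tendsto c atTop (𝓝 x) := by
        have h1 : Tendsto (fun n => L - y n) atTop (𝓝 (L - L)) :=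
          tendsto_const_nhds.sub hLtend
        rw [sub_self] at h1
        have := (tendsto_const_nhds (x := x) (f := atTop (α := ℕ))).add h1
        rw [add_zero] at this
        exact this
      have hatend : Tendsto a atTop (𝓝[>] (0:ℝ)) := by
        rw [tendsto_nhdsWithin_iff]
        exact ⟨Tendsto.div_atTop hctend hρpow, Eventually.of_forall fun n => hapos n⟩
      have hslopea : Tendsto (fun n => φ (a n) / a n) atTop (𝓝 1) := hslope.comp hatend
      have hprod : Tendsto (fun n => c n * (φ (a n) / a n)) atTop (𝓝 (x * 1)) :=
        hctend.mul hslopea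
      rw [mul_one] at hprod
      exact ge_of_tendsto hprod (Eventually.of_forall hbound)
    have hφL : φ L = x := le_antisymm hφLle hφLge
    have hinvL : φinv x = L := by
      rw [← hφL]; exact hinv2 L hL0
    rw [hinvL]
    exact ⟨hLtend, hbdd⟩
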